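/- The map λ ↦ ∫₀^∞ [ log⁻|λt − 1| · χ_{[0,1]}(t/λ) + log⁻|t/λ − 1| · χ_{[0,1]}(λt) ] dt, defined for λ > 0, has one-sided (right) derivative at λ = 1 equal to 0. -/

import Mathlib

open Real Set MeasureTheory Filter Topology intervalIntegral

lemma log_ii1 : IntervalIntegrable Real.log volume 0 1 := by
  rw [intervalIntegrable_iff_integrableOn_Ioc_of_le zero_le_one]
  have hmeas : AEStronglyMeasurable Real.log (volume.restrict (Ioc (0:ℝ) 1)) :=
    Real.measurable_log.aestronglyMeasurable
  have hint : IntegrableOn (fun x : ℝ => 2 * x ^ (-(1/2) : ℝ)) (Ioc (0:ℝ) 1) volume := by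
    have : IntervalIntegrable (fun x : ℝ => x ^ (-(1/2) : ℝ)) volume 0 1 :=
      intervalIntegral.intervalIntegrable_rpow' (by norm_num)
    rw [intervalIntegrable_iff_integrableOn_Ioc_of_le zero_le_one] at this
    exact this.const_mul 2
  refine hint.integrable.mono hmeas ?_
  filter_upwards [ae_restrict_mem measurableSet_Ioc] with x hx
  have hx0 : 0 < x := hx.1
  have hlog : Real.log x ≤ 0 := Real.log_nonpos hx0.le hx.2
  have hb : -Real.log x ≤ 2 * x ^ (-(1/2) : ℝ) := by
    have h2 : Real.log (x ^ (-(1/2) : ℝ)) ≤ x ^ (-(1/2) : ℝ) - 1 :=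
      Real.log_le_sub_one_of_pos (Real.rpow_pos_of_pos hx0 _)
    rw [Real.log_rpow hx0] at h2
    nlinarith [Real.rpow_pos_of_pos hx0 (-(1/2) : ℝ)]
  rw [Real.norm_eq_abs, Real.norm_eq_abs, abs_of_nonpos hlog,
    abs_of_pos (by positivity : (0:ℝ) < 2 * x ^ (-(1/2) : ℝ))]
  exact hb

lemma log_ii {a : ℝ} (ha : 0 ≤ a) : IntervalIntegrable Real.log volume 0 a := by
  rcases le_or_gt a 1 with h1 | h1
  · exact log_ii1.mono_set (by rw [uIcc_of_le ha, uIcc_of_le zero_le_one]; exact Icc_subset_Icc le_rfl h1)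
  · exact log_ii1.trans (intervalIntegrable_log (by
      rw [uIcc_of_le h1.le]; intro h; exact absurd h.1 (by norm_num)))

lemma log_ii_neg {a : ℝ} (ha : a ≤ 0) : IntervalIntegrable Real.log volume a 0 := by
  have h := (IntervalIntegrable.iff_comp_neg (f := Real.log) (a := 0) (b := -a)).mp (log_ii (a := -a) (by linarith))
  simp only [neg_zero, neg_neg] at h
  have heq : (fun x : ℝ => Real.log (-x)) = Real.log := by
    funext x; exact Real.log_neg_eq_log x
  rw [heq] at h; exact h.symm

lemma int_log0 {a : ℝ} (ha : 0 ≤ a) : ∫ x in (0:ℝ)..a, Real.log x = a * Real.log a - a := by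
  rcases eq_or_lt_of_le ha with rfl | ha'
  · simp
  · have := intervalIntegral.integral_eq_sub_of_hasDerivAt_of_le ha
      (f := fun x => x * Real.log x - x) (f' := Real.log)
      ((Real.continuous_mul_log.sub continuous_id).continuousOn)
      (fun x hx => by
        have := Real.hasDerivAt_mul_log (ne_of_gt hx.1)
        exact (this.sub (hasDerivAt_id x)).congr_deriv (by ring))
      (log_ii ha)
    simpa using this

lemma int_log_m1_neg {c : ℝ} (hc : c ≤ 0) :
    ∫ x in (-1:ℝ)..c, Real.log x = -1 - (-c) * Real.log (-c) + (-c) := by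
  have hcomp := intervalIntegral.integral_comp_neg (a := (-1:ℝ)) (b := c) (f := Real.log)
  have heq : (fun x : ℝ => Real.log (-x)) = Real.log := by
    funext x; exact Real.log_neg_eq_log x
  rw [heq, neg_neg] at hcomp
  rw [hcomp]
  have hsub := intervalIntegral.integral_interval_sub_left
    (f := Real.log) (μ := volume) (a := (0:ℝ)) (b := 1) (c := -c)
    log_ii1 (log_ii (by linarith))
  rw [int_log0 zero_le_one, int_log0 (by linarith : (0:ℝ) ≤ -c)] at hsub
  rw [← hsub]; simp; ring

lemma int_log_m1_pos {u : ℝ} (hu : 0 ≤ u) :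
    ∫ x in (-1:ℝ)..u, Real.log x = -1 + u * Real.log u - u := by
  have hadd := intervalIntegral.integral_add_adjacent_intervals
    (f := Real.log) (μ := volume) (a := (-1:ℝ)) (b := 0) (c := u)
    (log_ii_neg (by norm_num)) (log_ii hu)
  rw [← hadd, int_log0 hu]
  have h0 := int_log_m1_neg (le_refl (0:ℝ))
  rw [h0]; simp; ring

lemma J1 {lam : ℝ} (h1 : 1 ≤ lam) :
    ∫ t in (0:ℝ)..lam, Real.log (lam * t - 1)
      = lam⁻¹ * (-1 + (lam^2 - 1) * Real.log (lam^2 - 1) - (lam^2 - 1)) := by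
  have hlam : lam ≠ 0 := by linarith
  rw [intervalIntegral.integral_comp_mul_sub Real.log hlam 1]
  rw [mul_zero, zero_sub]
  rw [int_log_m1_pos (by nlinarith : (0:ℝ) ≤ lam * lam - 1)]
  rw [smul_eq_mul]; ring_nf

lemma J2 {lam : ℝ} (h1 : 1 ≤ lam) :
    ∫ t in (0:ℝ)..lam⁻¹, Real.log (lam⁻¹ * t - 1)
      = lam * (-1 - (1 - lam⁻¹^2) * Real.log (1 - lam⁻¹^2) + (1 - lam⁻¹^2)) := by
  have hlam : lam ≠ 0 := by linarith
  have hlaminv : lam⁻¹ ≠ 0 := inv_ne_zero hlam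
  rw [intervalIntegral.integral_comp_mul_sub Real.log hlaminv 1]
  rw [mul_zero, zero_sub]
  have hle : lam⁻¹ * lam⁻¹ - 1 ≤ 0 := by
    have : lam⁻¹ ≤ 1 := by
      rw [inv_le_one_iff₀]; right; exact h1
    nlinarith [inv_pos.mpr (by linarith : (0:ℝ) < lam)]
  rw [int_log_m1_neg hle]
  rw [smul_eq_mul, inv_inv]
  have : -(lam⁻¹ * lam⁻¹ - 1) = 1 - lam⁻¹^2 := by ring
  rw [this]

lemma Fval {lam : ℝ} (h1 : 1 ≤ lam) (h2 : lam ≤ 1.4) :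
    ∫ t in Ioi (0:ℝ),
        (min (Real.log |lam * t - 1|) 0 * (Icc (0:ℝ) 1).indicator 1 (t / lam)
          + min (Real.log |t / lam - 1|) 0 * (Icc (0:ℝ) 1).indicator 1 (lam * t))
      = lam⁻¹ * (-1 + (lam^2 - 1) * Real.log (lam^2 - 1) - (lam^2 - 1))
        + lam * (-1 - (1 - lam⁻¹^2) * Real.log (1 - lam⁻¹^2) + (1 - lam⁻¹^2)) := by
  have hlam0 : (0:ℝ) < lam := by linarith
  have hlamne : lam ≠ 0 := ne_of_gt hlam0
  set f1 : ℝ → ℝ := fun t => Real.log (lam * t - 1) with hf1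
  set f2 : ℝ → ℝ := fun t => Real.log (lam⁻¹ * t - 1) with hf2
  -- pointwise identity on Ioi 0
  have hpt : EqOn
      (fun t => (min (Real.log |lam * t - 1|) 0 * (Icc (0:ℝ) 1).indicator 1 (t / lam)
          + min (Real.log |t / lam - 1|) 0 * (Icc (0:ℝ) 1).indicator 1 (lam * t)))
      (fun t => (Ioc (0:ℝ) lam).indicator f1 t + (Ioc (0:ℝ) lam⁻¹).indicator f2 t)
      (Ioi (0:ℝ)) := by
    intro t ht
    simp only [mem_Ioi] at ht
    dsimp only
    congr 1
    · -- first term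
      by_cases hta : t ≤ lam
      · have hmem : t / lam ∈ Icc (0:ℝ) 1 := by
          constructor
          · positivity
          · rw [div_le_one hlam0]; exact hta
        have hmem' : t ∈ Ioc (0:ℝ) lam := ⟨ht, hta⟩
        rw [Set.indicator_of_mem hmem, Set.indicator_of_mem hmem']
        have habs : |lam * t - 1| ≤ 1 := by
          rw [abs_le]; constructor <;> nlinarith
        have hmin : min (Real.log |lam * t - 1|) 0 = Real.log |lam * t - 1| :=
          min_eq_left (Real.log_nonpos (abs_nonneg _) habs)
        rw [hmin, Real.log_abs]
        simp [hf1]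
      · push_neg at hta
        have hnm : t / lam ∉ Icc (0:ℝ) 1 := by
          intro h
          exact absurd ((div_le_one hlam0).mp h.2) (not_le.mpr hta)
        have hnm' : t ∉ Ioc (0:ℝ) lam := fun h => absurd h.2 (not_le.mpr hta)
        rw [Set.indicator_of_notMem hnm, Set.indicator_of_notMem hnm']
        simp
    · -- second term
      by_cases hta : t ≤ lam⁻¹
      · have hmem : lam * t ∈ Icc (0:ℝ) 1 := by
          constructor
          · positivity
          · calc lam * t ≤ lam * lam⁻¹ := by nlinarith
              _ = 1 := mul_inv_cancel₀ hlamne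
        have hmem' : t ∈ Ioc (0:ℝ) lam⁻¹ := ⟨ht, hta⟩
        rw [Set.indicator_of_mem hmem, Set.indicator_of_mem hmem']
        have habs : |t / lam - 1| ≤ 1 := by
          rw [abs_le]
          have h3 : t / lam ≤ lam⁻¹ / lam := by gcongr
          have h4 : lam⁻¹ / lam ≤ 1 := by
            rw [div_le_one hlam0]
            calc lam⁻¹ ≤ 1 := by rw [inv_le_one_iff₀]; right; exact h1
              _ ≤ lam := h1
          have h5 : 0 ≤ t / lam := by positivity
          constructor <;> linarith
        have hmin : min (Real.log |t / lam - 1|) 0 = Real.log |t / lam - 1| :=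
          min_eq_left (Real.log_nonpos (abs_nonneg _) habs)
        rw [hmin, Real.log_abs]
        simp [hf2, div_eq_inv_mul]
      · push_neg at hta
        have hnm : lam * t ∉ Icc (0:ℝ) 1 := by
          intro h
          have : t ≤ lam⁻¹ := by
            rw [← mul_le_mul_iff_right₀ hlam0, mul_inv_cancel₀ hlamne]
            exact h.2
          exact absurd this (not_le.mpr hta)
        have hnm' : t ∉ Ioc (0:ℝ) lam⁻¹ := fun h => absurd h.2 (not_le.mpr hta)
        rw [Set.indicator_of_notMem hnm, Set.indicator_of_notMem hnm']
        simp
  rw [setIntegral_congr_fun measurableSet_Ioi hpt]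
  -- integrability
  have hii1 : IntervalIntegrable f1 volume 0 lam := by
    have hbase : IntervalIntegrable Real.log volume (-1) (lam * lam - 1) :=
      (log_ii_neg (by norm_num)).trans (log_ii (by nlinarith))
    have h := (hbase.comp_sub_right 1).comp_mul_left (c := lam)
    have e1 : (-1 + 1 : ℝ) / lam = 0 := by norm_num
    have e2 : (lam * lam - 1 + 1) / lam = lam := by field_simp; ring
    rwa [e1, e2] at h
  have hii2 : IntervalIntegrable f2 volume 0 lam⁻¹ := by
    have hle : lam⁻¹ * lam⁻¹ - 1 ≤ 0 := by
      have hl1 : lam⁻¹ ≤ 1 := by rw [inv_le_one_iff₀]; right; exact h1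
      have hl0 : (0:ℝ) < lam⁻¹ := by positivity
      nlinarith
    have hgt : (-1:ℝ) ≤ lam⁻¹ * lam⁻¹ - 1 := by
      have : (0:ℝ) < lam⁻¹ * lam⁻¹ := by positivity
      linarith
    have hbase : IntervalIntegrable Real.log volume (-1) (lam⁻¹ * lam⁻¹ - 1) :=
      (log_ii_neg (by norm_num : (-1:ℝ) ≤ 0)).mono_set (by
          rw [uIcc_of_le hgt, uIcc_of_le (by norm_num : (-1:ℝ) ≤ 0)]
          exact Icc_subset_Icc le_rfl hle)
    have h := (hbase.comp_sub_right 1).comp_mul_left (c := lam⁻¹)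
    have hne : lam⁻¹ ≠ 0 := by positivity
    have e1 : (-1 + 1 : ℝ) / lam⁻¹ = 0 := by norm_num
    have e2 : (lam⁻¹ * lam⁻¹ - 1 + 1) / lam⁻¹ = lam⁻¹ := by field_simp; ring
    rwa [e1, e2] at h
  have hio1 : IntegrableOn f1 (Ioc (0:ℝ) lam) volume := by
    rwa [intervalIntegrable_iff_integrableOn_Ioc_of_le hlam0.le] at hii1
  have hio2 : IntegrableOn f2 (Ioc (0:ℝ) lam⁻¹) volume := by
    rwa [intervalIntegrable_iff_integrableOn_Ioc_of_le (by positivity : (0:ℝ) ≤ lam⁻¹)] at hii2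
  have hint1 : Integrable ((Ioc (0:ℝ) lam).indicator f1) (volume.restrict (Ioi (0:ℝ))) :=
    ((integrable_indicator_iff measurableSet_Ioc).mpr hio1).restrict
  have hint2 : Integrable ((Ioc (0:ℝ) lam⁻¹).indicator f2) (volume.restrict (Ioi (0:ℝ))) :=
    ((integrable_indicator_iff measurableSet_Ioc).mpr hio2).restrict
  rw [integral_add hint1 hint2]
  rw [setIntegral_indicator measurableSet_Ioc, setIntegral_indicator measurableSet_Ioc]
  rw [Set.inter_eq_self_of_subset_right (Ioc_subset_Ioi_self),
    Set.inter_eq_self_of_subset_right (Ioc_subset_Ioi_self)]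
  rw [← intervalIntegral.integral_of_le hlam0.le,
    ← intervalIntegral.integral_of_le (by positivity : (0:ℝ) ≤ lam⁻¹)]
  rw [hf1, hf2]
  rw [J1 h1, J2 h1]

lemma EeqG {lam : ℝ} (h1 : 1 ≤ lam) :
    lam⁻¹ * (-1 + (lam^2 - 1) * Real.log (lam^2 - 1) - (lam^2 - 1))
        + lam * (-1 - (1 - lam⁻¹^2) * Real.log (1 - lam⁻¹^2) + (1 - lam⁻¹^2))
      = -lam - lam⁻¹ + 2 * (lam - lam⁻¹) * Real.log lam := by
  rcases eq_or_lt_of_le h1 with rfl | h1'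
  · norm_num
  · have hlamne : lam ≠ 0 := by linarith
    have hpos : (0:ℝ) < lam^2 - 1 := by nlinarith
    have hlog : Real.log (1 - lam⁻¹^2) = Real.log (lam^2 - 1) - 2 * Real.log lam := by
      rw [show (1 - lam⁻¹^2) = (lam^2 - 1)/lam^2 by field_simp]
      rw [Real.log_div (ne_of_gt hpos) (by positivity), Real.log_pow]
      push_cast; ring
    rw [hlog]
    field_simp
    ring

lemma hasDerivAt_g : HasDerivAt (fun x : ℝ => -x - x⁻¹ + 2 * (x - x⁻¹) * Real.log x) 0 1 := by
  have hinv : HasDerivAt (fun x : ℝ => x⁻¹) (-(((1:ℝ))^2)⁻¹) 1 := hasDerivAt_inv one_ne_zero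
  have hA : HasDerivAt (fun x : ℝ => -x - x⁻¹) (-1 - (-(((1:ℝ))^2)⁻¹)) 1 :=
    (hasDerivAt_id 1).neg.sub hinv
  have hB : HasDerivAt (fun x : ℝ => 2 * (x - x⁻¹))
      (2 * (1 - (-(((1:ℝ))^2)⁻¹))) 1 :=
    (((hasDerivAt_id 1).sub hinv).const_mul 2)
  have hlog : HasDerivAt Real.log (1:ℝ)⁻¹ 1 := Real.hasDerivAt_log one_ne_zero
  have hC := hB.mul hlog
  have h := hA.add hC
  have : -1 - (-(((1:ℝ))^2)⁻¹) + (2 * (1 - (-(((1:ℝ))^2)⁻¹)) * Real.log 1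
      + 2 * ((1:ℝ) - 1⁻¹) * (1:ℝ)⁻¹) = 0 := by
    norm_num
  rw [this] at h
  exact h

theorem stmt_6 :
    HasDerivWithinAt
      (fun lam : ℝ => ∫ t in Ioi (0:ℝ),
        (min (Real.log |lam * t - 1|) 0 * (Icc (0:ℝ) 1).indicator 1 (t / lam)
          + min (Real.log |t / lam - 1|) 0 * (Icc (0:ℝ) 1).indicator 1 (lam * t)))
      0 (Ioi (1:ℝ)) 1 := by
  refine (hasDerivAt_g.hasDerivWithinAt).congr_of_eventuallyEq ?_ ?_
  · have hmem : Iio (1.4:ℝ) ∈ 𝓝[Ioi (1:ℝ)] (1:ℝ) :=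
      nhdsWithin_le_nhds (Iio_mem_nhds (by norm_num))
    filter_upwards [hmem, self_mem_nhdsWithin] with x hx1 hx2
    rw [Fval (le_of_lt hx2) (le_of_lt hx1), EeqG (le_of_lt hx2)]
  · rw [Fval le_rfl (by norm_num), EeqG le_rfl]
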